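/- Let H be a nonempty finite type, (U, μ) a probability space, ℓ : H × U → [0,1] a function measurable in u for each h, and P : H → ℝ a probability mass function with P(h) > 0 for all h. For h ∈ H set L(h) = ∫ ℓ(h,u) dμ(u) and, for S = (u_1,…,u_N) ∈ U^N, L̂(h,S) = (1/N) Σ_{i=1}^N ℓ(h,u_i). Fix λ > 0, δ ∈ (0,1], N ≥ 1, and define Z(S) = Σ_h P(h)·exp(−λ·L̂(h,S)) and the Gibbs posterior Q*_S(h) = P(h)·exp(−λ·L̂(h,S))/Z(S). Then with probability at least 1 − δ over S drawn from μ^N, Σ_h Q*_S(h)·L(h) ≤ −(1/λ)·log Z(S) + (1/λ)·log(1/δ) + λ/(8N). -/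

import Mathlib

open MeasureTheory
open scoped BigOperators
open MeasureTheory Real in


/-- Core of Hoeffding's lemma: `(1-m) + m e^s ≤ exp (s m + s²/8)` for `m ∈ [0,1]`. -/
lemma hoeffding_core {m : ℝ} (hm0 : 0 ≤ m) (hm1 : m ≤ 1) (s : ℝ) :
    (1 - m) + m * Real.exp s ≤ Real.exp (s * m + s ^ 2 / 8) := by
  obtain ⟨c, hc⟩ : ∃ c : ℝ, c = 1 - m := ⟨_, rfl⟩
  have hc0 : 0 ≤ c := by rw [hc]; linarith
  have hD : ∀ x : ℝ, 0 < c + m * Real.exp x := by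
    intro x
    rcases eq_or_lt_of_le hm0 with h | h
    · simp [hc, ← h]
    · have := Real.exp_pos x
      nlinarith
  set g1 : ℝ → ℝ := fun x => x / 4 + m - m * Real.exp x / (c + m * Real.exp x) with hg1
  set g : ℝ → ℝ := fun x => x ^ 2 / 8 + x * m - Real.log (c + m * Real.exp x) with hg
  have hDderiv : ∀ x : ℝ, HasDerivAt (fun y => c + m * Real.exp y) (m * Real.exp x) x := by
    intro x
    simpa using ((Real.hasDerivAt_exp x).const_mul m).const_add c
  have hgderiv : ∀ x : ℝ, HasDerivAt g (g1 x) x := by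
    intro x
    have h1 : HasDerivAt (fun y : ℝ => y ^ 2 / 8 + y * m) (x / 4 + m) x := by
      have := ((hasDerivAt_pow 2 x).div_const 8).add ((hasDerivAt_id x).mul_const m)
      exact this.congr_deriv (by ring)
    have h2 : HasDerivAt (fun y => Real.log (c + m * Real.exp y))
        (m * Real.exp x / (c + m * Real.exp x)) x :=
      (hDderiv x).log (hD x).ne'
    exact h1.sub h2
  have hg1deriv : ∀ x : ℝ, HasDerivAt g1
      (1 / 4 - m * c * Real.exp x / (c + m * Real.exp x) ^ 2) x := by
    intro x
    have h1 : HasDerivAt (fun y : ℝ => y / 4 + m) (1 / 4) x := by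
      simpa using ((hasDerivAt_id x).div_const 4).add_const m
    have h2 : HasDerivAt (fun y => m * Real.exp y / (c + m * Real.exp y))
        ((m * Real.exp x * (c + m * Real.exp x) - m * Real.exp x * (m * Real.exp x)) /
          (c + m * Real.exp x) ^ 2) x :=
      ((Real.hasDerivAt_exp x).const_mul m).div (hDderiv x) (hD x).ne'
    have := h1.sub h2
    refine this.congr_deriv ?_
    field_simp
    ring
  have hg1mono : Monotone g1 := by
    apply monotone_of_deriv_nonneg (fun x => (hg1deriv x).differentiableAt)
    intro x
    rw [(hg1deriv x).deriv]
    have hex := Real.exp_pos x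
    rw [sub_nonneg, div_le_iff₀ (pow_pos (hD x) 2)]
    have hkey : (c + m * Real.exp x) ^ 2 = (c - m * Real.exp x) ^ 2 + 4 * (m * c * Real.exp x) := by
      ring
    nlinarith [sq_nonneg (c - m * Real.exp x)]
  have hg10 : g1 0 = 0 := by
    simp [hg1, hc]
  have hg0 : g 0 = 0 := by
    simp [hg, hc]
  have hgnonneg : ∀ x : ℝ, 0 ≤ g x := by
    intro x
    rcases le_total 0 x with hx | hx
    · have hmono : MonotoneOn g (Set.Ici (0 : ℝ)) := by
        apply monotoneOn_of_deriv_nonneg (convex_Ici 0)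
          (fun y _ => (hgderiv y).differentiableAt.continuousAt.continuousWithinAt)
          (fun y _ => (hgderiv y).differentiableAt.differentiableWithinAt)
        intro y hy
        rw [(hgderiv y).deriv, ← hg10]
        exact hg1mono (le_of_lt (by simpa using hy))
      have := hmono (Set.mem_Ici.2 le_rfl) hx hx
      rwa [hg0] at this
    · have hmono : AntitoneOn g (Set.Iic (0 : ℝ)) := by
        apply antitoneOn_of_deriv_nonpos (convex_Iic 0)
          (fun y _ => (hgderiv y).differentiableAt.continuousAt.continuousWithinAt)
          (fun y _ => (hgderiv y).differentiableAt.differentiableWithinAt)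
        intro y hy
        rw [(hgderiv y).deriv, ← hg10]
        exact hg1mono (le_of_lt (by simpa using hy))
      have := hmono hx (Set.mem_Iic.2 le_rfl) hx
      rwa [hg0] at this
  have hlog : Real.log (c + m * Real.exp s) ≤ s * m + s ^ 2 / 8 := by
    have := hgnonneg s
    simp only [hg] at this
    linarith
  calc (1 - m) + m * Real.exp s = c + m * Real.exp s := by rw [hc]
    _ = Real.exp (Real.log (c + m * Real.exp s)) := (Real.exp_log (hD s)).symm
    _ ≤ Real.exp (s * m + s ^ 2 / 8) := Real.exp_le_exp.2 hlog

open MeasureTheory Real in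
/-- Hoeffding's lemma for `[0,1]`-valued random variables. -/
lemma hoeffding_mgf {U : Type*} [MeasurableSpace U] (μ : Measure U) [IsProbabilityMeasure μ]
    (X : U → ℝ) (hX : Measurable X) (hX01 : ∀ u, X u ∈ Set.Icc (0 : ℝ) 1) (s : ℝ) :
    ∫ u, Real.exp (s * (X u - ∫ v, X v ∂μ)) ∂μ ≤ Real.exp (s ^ 2 / 8) := by
  have hXint : Integrable X μ := by
    refine (integrable_const (1 : ℝ)).mono' hX.aestronglyMeasurable ?_
    filter_upwards with u
    rw [Real.norm_eq_abs, abs_le]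
    exact ⟨by linarith [(hX01 u).1], (hX01 u).2⟩
  set m : ℝ := ∫ v, X v ∂μ with hm
  have hm0 : 0 ≤ m := integral_nonneg fun u => (hX01 u).1
  have hm1 : m ≤ 1 := by
    calc m ≤ ∫ _, (1 : ℝ) ∂μ := integral_mono hXint (integrable_const 1) fun u => (hX01 u).2
    _ = 1 := by simp
  have hptwise : ∀ u, Real.exp (s * X u) ≤ (1 - X u) + X u * Real.exp s := by
    intro u
    have := convexOn_exp.2 (Set.mem_univ (0 : ℝ)) (Set.mem_univ s)
      (by linarith [(hX01 u).2] : (0:ℝ) ≤ 1 - X u) (hX01 u).1 (by ring)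
    simpa [smul_eq_mul, mul_comm] using this
  have hexpint : Integrable (fun u => Real.exp (s * X u)) μ := by
    refine (integrable_const (Real.exp |s|)).mono'
      ((Real.measurable_exp.comp (hX.const_mul s)).aestronglyMeasurable) ?_
    filter_upwards with u
    rw [Real.norm_eq_abs, abs_of_pos (Real.exp_pos _)]
    apply Real.exp_le_exp.2
    calc s * X u ≤ |s * X u| := le_abs_self _
    _ = |s| * |X u| := abs_mul _ _
    _ ≤ |s| * 1 := by
        apply mul_le_mul_of_nonneg_left _ (abs_nonneg s)
        rw [abs_le]; exact ⟨by linarith [(hX01 u).1], (hX01 u).2⟩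
    _ = |s| := mul_one _
  have hint2 : Integrable (fun u => (1 - X u) + X u * Real.exp s) μ :=
    ((integrable_const (1:ℝ)).sub hXint).add (hXint.mul_const _)
  have hmain : ∫ u, Real.exp (s * X u) ∂μ ≤ (1 - m) + m * Real.exp s := by
    calc ∫ u, Real.exp (s * X u) ∂μ ≤ ∫ u, ((1 - X u) + X u * Real.exp s) ∂μ :=
        integral_mono hexpint hint2 hptwise
    _ = (1 - m) + m * Real.exp s := by
        have heq : (fun u => (1 - X u) + X u * Real.exp s)
            = fun u => 1 + X u * (Real.exp s - 1) := funext fun u => by ring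
        rw [heq, integral_add (integrable_const 1) (hXint.mul_const _), integral_const,
          integral_mul_const, ← hm]
        simp
        ring
  have key : ∫ u, Real.exp (s * (X u - m)) ∂μ
      = (∫ u, Real.exp (s * X u) ∂μ) * Real.exp (-(s * m)) := by
    rw [← integral_mul_const]
    congr 1; funext u
    rw [← Real.exp_add]; ring_nf
  rw [key]
  calc (∫ u, Real.exp (s * X u) ∂μ) * Real.exp (-(s * m))
      ≤ ((1 - m) + m * Real.exp s) * Real.exp (-(s * m)) := by
        apply mul_le_mul_of_nonneg_right hmain (le_of_lt (Real.exp_pos _))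
    _ ≤ Real.exp (s * m + s ^ 2 / 8) * Real.exp (-(s * m)) := by
        apply mul_le_mul_of_nonneg_right (hoeffding_core hm0 hm1 s) (le_of_lt (Real.exp_pos _))
    _ = Real.exp (s ^ 2 / 8) := by rw [← Real.exp_add]; ring_nf


/-- High-probability bound for the Gibbs posterior: with probability at least `1 − δ` over
`S ~ μ^N`, the generalization error of the Gibbs posterior
`Q*_S(h) = P(h)·exp(−λ·L̂(h,S))/Z(S)` satisfies
`Σ_h Q*_S(h)·L(h) ≤ −(1/λ)·log Z(S) + (1/λ)·log(1/δ) + λ/(8N)`. -/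
theorem gibbs_posterior_pac_bound {H : Type*} [Fintype H] [Nonempty H]
    {U : Type*} [MeasurableSpace U] (μ : Measure U) [IsProbabilityMeasure μ]
    (ℓ : H → U → ℝ) (hmeas : ∀ h, Measurable (ℓ h))
    (hℓ : ∀ h u, ℓ h u ∈ Set.Icc (0 : ℝ) 1)
    (P : H → ℝ) (hPpos : ∀ h, 0 < P h) (hPsum : ∑ h, P h = 1)
    (lam : ℝ) (hlam : 0 < lam) (δ : ℝ) (hδ : δ ∈ Set.Ioc (0 : ℝ) 1)
    (N : ℕ) (hN : 1 ≤ N) :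
    (1 : ENNReal) - ENNReal.ofReal δ ≤
      Measure.pi (fun _ : Fin N => μ)
        {S : Fin N → U |
          ∑ h, (P h * Real.exp (-lam * ((N : ℝ)⁻¹ * ∑ i, ℓ h (S i))) /
              ∑ h', P h' * Real.exp (-lam * ((N : ℝ)⁻¹ * ∑ i, ℓ h' (S i))))
            * (∫ u, ℓ h u ∂μ)
          ≤ -(1 / lam) *
              Real.log (∑ h', P h' * Real.exp (-lam * ((N : ℝ)⁻¹ * ∑ i, ℓ h' (S i))))
            + (1 / lam) * Real.log (1 / δ) + lam / (8 * N)} := by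
  classical
  have hδ0 : 0 < δ := hδ.1
  have hNR : (0 : ℝ) < N := Nat.cast_pos.mpr hN
  have hNne : (N : ℝ) ≠ 0 := hNR.ne'
  set pr : Measure (Fin N → U) := Measure.pi (fun _ : Fin N => μ) with hpr
  set m : H → ℝ := fun h => ∫ u, ℓ h u ∂μ with hm
  have hm01 : ∀ h, m h ∈ Set.Icc (0 : ℝ) 1 := by
    intro h
    have hint : Integrable (ℓ h) μ := by
      refine (integrable_const (1 : ℝ)).mono' (hmeas h).aestronglyMeasurable ?_
      filter_upwards with u
      rw [Real.norm_eq_abs, abs_le]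
      exact ⟨by linarith [(hℓ h u).1], (hℓ h u).2⟩
    constructor
    · exact integral_nonneg fun u => (hℓ h u).1
    · calc m h ≤ ∫ _, (1 : ℝ) ∂μ := integral_mono hint (integrable_const 1) fun u => (hℓ h u).2
      _ = 1 := by simp
  set f : H → U → ℝ := fun h u => Real.exp (lam / N * (m h - ℓ h u)) with hf
  -- coordinate mgf bound
  have hcoord : ∀ h, ∫ u, f h u ∂μ ≤ Real.exp ((lam / N) ^ 2 / 8) := by
    intro h
    have h1 := hoeffding_mgf μ (ℓ h) (hmeas h) (hℓ h) (-(lam / N))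
    have h2 : ∀ u, lam / N * (m h - ℓ h u) = -(lam / N) * (ℓ h u - ∫ v, ℓ h v ∂μ) := by
      intro u; rw [hm]; ring
    calc ∫ u, f h u ∂μ = ∫ u, Real.exp (-(lam / N) * (ℓ h u - ∫ v, ℓ h v ∂μ)) ∂μ := by
          refine integral_congr_ae (Filter.Eventually.of_forall fun u => ?_)
          simp only [hf]
          rw [h2 u]
      _ ≤ Real.exp ((-(lam / N)) ^ 2 / 8) := h1
      _ = Real.exp ((lam / N) ^ 2 / 8) := by rw [neg_pow]; norm_num
  have hfpos : ∀ h u, 0 < f h u := fun h u => Real.exp_pos _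
  have hfint : ∀ h, Integrable (f h) μ := by
    intro h
    refine (integrable_const (Real.exp (lam / N))).mono'
      ((Real.measurable_exp.comp (((hmeas h).const_sub (m h)).const_mul
        (lam / N))).aestronglyMeasurable) ?_
    filter_upwards with u
    rw [Real.norm_eq_abs, abs_of_pos (hfpos h u)]
    apply Real.exp_le_exp.2
    have h1 : m h - ℓ h u ≤ 1 := by linarith [(hm01 h).2, (hℓ h u).1]
    have h2 : 0 < lam / N := by positivity
    nlinarith
  have hfint_nonneg : ∀ h, 0 ≤ ∫ u, f h u ∂μ := fun h => integral_nonneg fun u => (hfpos h u).le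
  -- pi measure as volume
  letI : MeasureSpace U := ⟨μ⟩
  haveI : IsProbabilityMeasure (volume : Measure U) := (by assumption : IsProbabilityMeasure μ)
  haveI : SigmaFinite (volume : Measure U) := inferInstance
  have hprvol : pr = (volume : Measure (Fin N → U)) := rfl
  -- expectation bound on each product term
  have hprod : ∀ h, ∫ S, (∏ i : Fin N, f h (S i)) ∂pr ≤ Real.exp (lam ^ 2 / (8 * N)) := by
    intro h
    rw [hpr]
    rw [MeasureTheory.integral_fintype_prod_eq_pow (ι := Fin N) (f h)]
    calc (∫ u, f h u) ^ Fintype.card (Fin N) = (∫ u, f h u ∂μ) ^ N := by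
          rw [Fintype.card_fin]; rfl
      _ ≤ (Real.exp ((lam / N) ^ 2 / 8)) ^ N := pow_le_pow_left₀ (hfint_nonneg h) (hcoord h) N
      _ = Real.exp (N * ((lam / N) ^ 2 / 8)) := by rw [← Real.exp_nat_mul]
      _ = Real.exp (lam ^ 2 / (8 * N)) := by congr 1; field_simp
  -- the function F
  set F : (Fin N → U) → ℝ := fun S =>
    ∑ h, P h * Real.exp (lam * m h) * Real.exp (-lam * ((N : ℝ)⁻¹ * ∑ i, ℓ h (S i))) with hF
  have hFeq : ∀ (S : Fin N → U) (h : H),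
      (∏ i : Fin N, f h (S i))
        = Real.exp (lam * m h) * Real.exp (-lam * ((N : ℝ)⁻¹ * ∑ i, ℓ h (S i))) := by
    intro S h
    simp only [hf]
    rw [← Real.exp_sum, ← Real.exp_add]
    congr 1
    simp_rw [mul_sub]
    rw [Finset.sum_sub_distrib, Finset.sum_const, Finset.card_univ, Fintype.card_fin,
      ← Finset.mul_sum]
    field_simp
    linear_combination (lam * m h * (N : ℝ)) * (mul_inv_cancel₀ hNne)
  have hFalt : F = fun S => ∑ h, P h * ∏ i : Fin N, f h (S i) := by
    funext S
    rw [hF]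
    exact Finset.sum_congr rfl fun h _ => by rw [hFeq S h, mul_assoc]
  have hFpos : ∀ S, 0 < F S := by
    intro S
    rw [hF]
    exact Finset.sum_pos
      (fun h _ => mul_pos (mul_pos (hPpos h) (Real.exp_pos _)) (Real.exp_pos _))
      Finset.univ_nonempty
  -- integrability and measurability of F
  have hprodint : ∀ h : H, Integrable (fun S : Fin N → U => ∏ i, f h (S i)) pr := by
    intro h
    rw [hprvol]
    exact Integrable.fintype_prod (f := fun _ : Fin N => f h) fun _ => hfint h
  have hFint : Integrable F pr := by
    rw [hFalt]
    exact integrable_finset_sum _ fun h _ => (hprodint h).const_mul (P h)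
  have hFmeas : Measurable F := by
    rw [hF]
    exact Finset.measurable_sum _ fun h _ =>
      (measurable_const.mul (Real.measurable_exp.comp
        (((Finset.measurable_sum Finset.univ fun i _ =>
          (hmeas h).comp (measurable_pi_apply i)).const_mul ((N : ℝ)⁻¹)).const_mul (-lam))))
  -- expectation of F
  have hEF : ∫ S, F S ∂pr ≤ Real.exp (lam ^ 2 / (8 * N)) := by
    rw [hFalt]
    rw [integral_finset_sum _ fun h _ => (hprodint h).const_mul (P h)]
    calc ∑ h, ∫ S, P h * ∏ i, f h (S i) ∂pr
        = ∑ h, P h * ∫ S, (∏ i, f h (S i)) ∂pr :=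
          Finset.sum_congr rfl fun h _ => integral_const_mul _ _
      _ ≤ ∑ h, P h * Real.exp (lam ^ 2 / (8 * N)) :=
          Finset.sum_le_sum fun h _ => mul_le_mul_of_nonneg_left (hprod h) (hPpos h).le
      _ = Real.exp (lam ^ 2 / (8 * N)) := by rw [← Finset.sum_mul, hPsum, one_mul]
  -- Markov
  set A : ℝ := Real.exp (lam ^ 2 / (8 * N)) with hA
  have hApos : 0 < A := Real.exp_pos _
  have hAδpos : 0 < A / δ := div_pos hApos hδ0
  have markov : pr {S | A / δ ≤ F S} ≤ ENNReal.ofReal δ := by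
    have h1 := mul_meas_ge_le_lintegral₀ (μ := pr)
      (hFmeas.ennreal_ofReal.aemeasurable) (ENNReal.ofReal (A / δ))
    have hset : {S | ENNReal.ofReal (A / δ) ≤ ENNReal.ofReal (F S)} = {S | A / δ ≤ F S} := by
      ext S
      simp only [Set.mem_setOf_eq]
      exact ENNReal.ofReal_le_ofReal_iff (hFpos S).le
    have h2 : ∫⁻ S, ENNReal.ofReal (F S) ∂pr = ENNReal.ofReal (∫ S, F S ∂pr) :=
      (ofReal_integral_eq_lintegral_ofReal hFint
        (Filter.Eventually.of_forall fun S => (hFpos S).le)).symm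
    rw [hset] at h1
    have hεne0 : ENNReal.ofReal (A / δ) ≠ 0 := by
      simp [ENNReal.ofReal_eq_zero, not_le, hAδpos]
    have hεnetop : ENNReal.ofReal (A / δ) ≠ ⊤ := ENNReal.ofReal_ne_top
    have h3 : pr {S | A / δ ≤ F S} ≤ ENNReal.ofReal (∫ S, F S ∂pr) / ENNReal.ofReal (A / δ) := by
      rw [ENNReal.le_div_iff_mul_le (Or.inl hεne0) (Or.inl hεnetop), mul_comm, ← h2]
      exact h1
    refine h3.trans ?_
    refine (ENNReal.div_le_div_right (ENNReal.ofReal_le_ofReal hEF) _).trans_eq ?_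
    rw [← ENNReal.ofReal_div_of_pos hAδpos]
    congr 1
    field_simp
  -- the good event implies the stated inequality
  have hsubset : {S : Fin N → U | F S ≤ A / δ} ⊆
      {S : Fin N → U |
          ∑ h, (P h * Real.exp (-lam * ((N : ℝ)⁻¹ * ∑ i, ℓ h (S i))) /
              ∑ h', P h' * Real.exp (-lam * ((N : ℝ)⁻¹ * ∑ i, ℓ h' (S i))))
            * (∫ u, ℓ h u ∂μ)
          ≤ -(1 / lam) *
              Real.log (∑ h', P h' * Real.exp (-lam * ((N : ℝ)⁻¹ * ∑ i, ℓ h' (S i))))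
            + (1 / lam) * Real.log (1 / δ) + lam / (8 * N)} := by
    intro S hS
    simp only [Set.mem_setOf_eq] at hS ⊢
    set Z : ℝ := ∑ h', P h' * Real.exp (-lam * ((N : ℝ)⁻¹ * ∑ i, ℓ h' (S i))) with hZ
    have hZpos : 0 < Z :=
      Finset.sum_pos (fun h _ => mul_pos (hPpos h) (Real.exp_pos _)) Finset.univ_nonempty
    set w : H → ℝ := fun h =>
      P h * Real.exp (-lam * ((N : ℝ)⁻¹ * ∑ i, ℓ h (S i))) / Z with hw
    have hw0 : ∀ h, 0 ≤ w h := fun h =>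
      div_nonneg (mul_pos (hPpos h) (Real.exp_pos _)).le hZpos.le
    have hw1 : ∑ h, w h = 1 := by
      simp only [hw]
      rw [← Finset.sum_div, ← hZ, div_self hZpos.ne']
    have hjensen := convexOn_exp.map_sum_le (t := Finset.univ) (p := fun h => lam * m h)
      (fun h _ => hw0 h) hw1 (fun h _ => Set.mem_univ _)
    simp only [smul_eq_mul] at hjensen
    have hsum_eq : ∑ h, w h * Real.exp (lam * m h) = F S / Z := by
      simp only [hF, hw]
      rw [Finset.sum_div]
      exact Finset.sum_congr rfl fun h _ => by ring
    have hlog : lam * ∑ h, w h * m h ≤ Real.log (F S / Z) := by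
      rw [Real.le_log_iff_exp_le (div_pos (hFpos S) hZpos)]
      have h1 : lam * ∑ h, w h * m h = ∑ h, w h * (lam * m h) := by
        rw [Finset.mul_sum]
        exact Finset.sum_congr rfl fun h _ => by ring
      rw [h1]
      exact hjensen.trans_eq hsum_eq
    have hnum : Real.log (F S / Z) ≤ lam ^ 2 / (8 * N) + Real.log (1 / δ) - Real.log Z := by
      rw [Real.log_div (hFpos S).ne' hZpos.ne']
      have h1 : Real.log (F S) ≤ Real.log (A / δ) := Real.log_le_log (hFpos S) hS
      have h2 : Real.log (A / δ) = lam ^ 2 / (8 * N) + Real.log (1 / δ) := by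
        rw [Real.log_div hApos.ne' hδ0.ne', hA, Real.log_exp, one_div, Real.log_inv]
        ring
      linarith
    calc ∑ h, w h * (∫ u, ℓ h u ∂μ) = ∑ h, w h * m h := by simp [hm]
      _ ≤ Real.log (F S / Z) / lam := by
          rw [le_div_iff₀ hlam, mul_comm]
          exact hlog
      _ ≤ (lam ^ 2 / (8 * N) + Real.log (1 / δ) - Real.log Z) / lam :=
          div_le_div_of_nonneg_right hnum hlam.le
      _ = -(1 / lam) * Real.log Z + (1 / lam) * Real.log (1 / δ) + lam / (8 * N) := by
          field_simp
          ring
  -- final assembly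
  haveI : IsProbabilityMeasure pr := by
    rw [hpr]
    infer_instance
  have hGc : pr {S : Fin N → U | F S ≤ A / δ}ᶜ ≤ ENNReal.ofReal δ := by
    refine (measure_mono ?_).trans markov
    intro S hS
    simp only [Set.mem_compl_iff, Set.mem_setOf_eq, not_le] at hS
    exact le_of_lt hS
  have hGood : (1 : ENNReal) - ENNReal.ofReal δ ≤ pr {S : Fin N → U | F S ≤ A / δ} := by
    rw [tsub_le_iff_right]
    calc (1 : ENNReal) = pr Set.univ := measure_univ.symm
      _ = pr ({S : Fin N → U | F S ≤ A / δ} ∪ {S : Fin N → U | F S ≤ A / δ}ᶜ) := by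
          rw [Set.union_compl_self]
      _ ≤ pr {S : Fin N → U | F S ≤ A / δ} + pr {S : Fin N → U | F S ≤ A / δ}ᶜ :=
          measure_union_le _ _
      _ ≤ pr {S : Fin N → U | F S ≤ A / δ} + ENNReal.ofReal δ := by
          exact add_le_add le_rfl hGc
  exact hGood.trans (measure_mono hsubset)
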